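/- Let C be a Type I code of length n over Z_{2^m} with n ≡ 2 (mod 4). Write C = C_0 ∪ C_2 and C_0^⊥ = C_0 ∪ C_1 ∪ C_2 ∪ C_3 for the four cosets of the doubly-even subcode C_0. Then for all x ∈ C_1 and y ∈ C_1, x·y ≡ 2^{m−1} (mod 2^m); for x ∈ C_1, y ∈ C_2, x·y ≡ 2^{m−1} (mod 2^m); for x ∈ C_1, y ∈ C_3, x·y ≡ 0 (mod 2^m); and for x, y ∈ C_2, x·y ≡ 0 (mod 2^m). -/

import Mathlib

open Finset

/-- Standard bilinear (dot) product on `Fin n → R`. -/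
def dotp {R : Type*} [CommRing R] {n : ℕ} (u v : Fin n → R) : R := ∑ i, u i * v i

/-- Dual of a set of vectors with respect to the standard bilinear form. -/
def dualCode {R : Type*} [CommRing R] {n : ℕ} (S : Set (Fin n → R)) : Set (Fin n → R) :=
  {v | ∀ u ∈ S, dotp u v = 0}

/-- Euclidean weight of an element of `ZMod N`. -/
def wtE {N : ℕ} (a : ZMod N) : ℕ := min (a.val ^ 2) ((N - a.val) ^ 2)

/-- Euclidean weight of a vector. -/
def wtEv {N n : ℕ} (v : Fin n → ZMod N) : ℕ := ∑ i, wtE (v i)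

/-- Doubly-even subcode (as a set): codewords of Euclidean weight divisible by 2^(m+1). -/
def deSub (m n : ℕ) (C : AddSubgroup (Fin n → ZMod (2 ^ m))) : Set (Fin n → ZMod (2 ^ m)) :=
  {c | c ∈ C ∧ 2 ^ (m + 1) ∣ wtEv c}


section aux
open Complex

noncomputable def ee (k : ℕ) (j : ℤ) : ℂ :=
  Complex.exp (2 * Real.pi * Complex.I * j / 2 ^ k)
lemma two_pow_ne_zero_c (k : ℕ) : ((2:ℂ) ^ k) ≠ 0 := pow_ne_zero _ two_ne_zero
lemma ee_add (k : ℕ) (a b : ℤ) : ee k (a + b) = ee k a * ee k b := by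
  rw [ee, ee, ee, ← Complex.exp_add]; congr 1; push_cast; ring
lemma ee_zero (k : ℕ) : ee k 0 = 1 := by simp [ee]
lemma ee_eq_one_iff (k : ℕ) (j : ℤ) : ee k j = 1 ↔ (2 ^ k : ℤ) ∣ j := by
  rw [ee, Complex.exp_eq_one_iff]
  have h2 : ((2:ℂ) ^ k) ≠ 0 := two_pow_ne_zero_c k
  have hπ : (Real.pi : ℂ) ≠ 0 := Complex.ofReal_ne_zero.2 Real.pi_ne_zero
  have hbase : (2 * (Real.pi : ℂ) * I) ≠ 0 := by simp [hπ, Complex.I_ne_zero]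
  constructor
  · rintro ⟨z, hz⟩
    refine ⟨z, ?_⟩
    have h : (j : ℂ) = 2 ^ k * z := by
      apply mul_left_cancel₀ hbase
      have h' : 2 * (Real.pi:ℂ) * I * j = z * (2 * Real.pi * I) * 2 ^ k := by
        field_simp at hz; linear_combination (2 * (Real.pi:ℂ) * I) * hz
      rw [h']; ring
    exact_mod_cast h
  · rintro ⟨z, hz⟩
    refine ⟨z, ?_⟩
    rw [hz]; push_cast; field_simp
lemma ee_congr {k : ℕ} {a b : ℤ} (h : a ≡ b [ZMOD (2 ^ k)]) : ee k a = ee k b := by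
  have h1 : ee k (b + (a - b)) = ee k b * ee k (a - b) := ee_add k b (a - b)
  rw [show b + (a - b) = a by ring] at h1
  rw [h1, (ee_eq_one_iff k (a-b)).2 (Int.ModEq.dvd h.symm), mul_one]
lemma ee_succ_two_mul (k : ℕ) (j : ℤ) : ee (k + 1) (2 * j) = ee k j := by
  rw [ee, ee]; congr 1
  have h2 : ((2:ℂ) ^ k) ≠ 0 := two_pow_ne_zero_c k
  push_cast; field_simp; ring
lemma ee_half_neg_one (k : ℕ) : ee (k + 1) (2 ^ k) = -1 := by
  have h : ee (k+1) (2 ^ k) = Complex.exp (Real.pi * Complex.I) := by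
    rw [ee]; congr 1
    have h2 : ((2:ℂ) ^ (k+1)) ≠ 0 := two_pow_ne_zero_c (k+1)
    push_cast; rw [div_eq_iff h2]; ring
  rw [h, Complex.exp_pi_mul_I]
lemma ee_int_mul (k : ℕ) (j c : ℤ) : ee k (j * c) = (ee k c) ^ j := by
  rw [ee, ee, ← Complex.exp_int_mul]
  congr 1; push_cast; ring

instance instNZ (m : ℕ) : NeZero (2 ^ m) := ⟨by positivity⟩
lemma int_emod_self_modEq (x N : ℤ) : x % N ≡ x [ZMOD N] := Int.emod_emod_of_dvd x dvd_rfl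
lemma sq_congr {k : ℕ} (hk : 1 ≤ k) {a b : ℤ} (h : a ≡ b [ZMOD (2 ^ k)]) :
    a * a ≡ b * b [ZMOD (2 ^ (k + 1))] := by
  obtain ⟨j, rfl⟩ : ∃ j, k = j + 1 := ⟨k - 1, by omega⟩
  rw [Int.modEq_iff_dvd] at h ⊢
  obtain ⟨c, hc⟩ := h
  have hbb : b * b - a * a = (2 ^ (j+1) * c) * (2 ^ (j+1) * c) + 2 * a * (2 ^ (j+1) * c) := by
    rw [← hc]; ring
  exact hbb ▸ dvd_add ⟨2 ^ j * c * c, by ring⟩ ⟨a * c, by ring⟩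
lemma sum_modEq {ι : Type*} {s : Finset ι} {f g : ι → ℤ} {c : ℤ}
    (h : ∀ i ∈ s, f i ≡ g i [ZMOD c]) : (∑ i ∈ s, f i) ≡ (∑ i ∈ s, g i) [ZMOD c] := by
  rw [Int.modEq_iff_dvd, ← Finset.sum_sub_distrib]
  exact Finset.dvd_sum fun i hi => (Int.modEq_iff_dvd.1 (h i hi))

lemma val_add_modEq {N : ℕ} [NeZero N] (a b : ZMod N) :
    (((a + b).val : ℤ)) ≡ ((a.val : ℤ) + (b.val : ℤ)) [ZMOD (N:ℤ)] := by
  have h := ZMod.val_add a b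
  calc (((a + b).val : ℤ)) = ((a.val + b.val) % N : ℕ) := by rw [h]
    _ ≡ _ [ZMOD (N:ℤ)] := by push_cast; exact int_emod_self_modEq _ _
lemma val_sub_modEq {N : ℕ} [NeZero N] (a b : ZMod N) :
    (((a - b).val : ℤ)) ≡ ((a.val : ℤ) - (b.val : ℤ)) [ZMOD (N:ℤ)] := by
  have h := val_add_modEq (a - b) b
  rw [sub_add_cancel] at h
  have h2 := (h.symm).sub_right ((b.val : ℤ))
  simpa [add_sub_cancel_right] using h2

noncomputable def gg (k : ℕ) : ℂ := ∑ x : ZMod (2 ^ k), ee (k + 1) ((x.val : ℤ) * (x.val : ℤ))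

def Ef (a b : ℤ) : ℤ := a * a - 2 * a * b + 2 * b * b

lemma E_congr {K : ℕ} (hK : 1 ≤ K) (a : ℤ) {b b' : ℤ} (h : b ≡ b' [ZMOD ((2:ℤ) ^ K)]) :
    Ef a b ≡ Ef a b' [ZMOD ((2:ℤ) ^ (K + 1))] := by
  have h2 := sq_congr hK h
  rw [Int.modEq_iff_dvd] at h h2 ⊢
  obtain ⟨d, hd⟩ := h
  obtain ⟨e', he'⟩ := h2
  have hh : Ef a b' - Ef a b = -2 * a * (b' - b) + 2 * (b' * b' - b * b) := by
    unfold Ef; ring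
  rw [hh, hd, he']
  exact dvd_add ⟨-(a * d), by ring⟩ ⟨2 * e', by ring⟩

lemma inner_odd_zero (k : ℕ) (hk : 1 ≤ k) (a : ℤ) (ha : Odd a) :
    ∑ y : ZMod (2 ^ (k + 1)), ee (k + 2) (Ef a ((y.val : ℤ))) = 0 := by
  obtain ⟨j, rfl⟩ : ∃ j, k = j + 1 := ⟨k - 1, by omega⟩
  set c : ZMod (2 ^ (j + 2)) := ((2 ^ (j + 1) : ℕ) : ZMod (2 ^ (j + 2))) with hc
  have hcval : c.val = 2 ^ (j + 1) := by
    rw [hc]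
    exact ZMod.val_cast_of_lt (Nat.pow_lt_pow_succ one_lt_two)
  have hshift : ∀ y : ZMod (2 ^ (j + 2)),
      ee (j + 3) (Ef a (((y + c).val : ℤ))) = - ee (j + 3) (Ef a ((y.val : ℤ))) := by
    intro y
    have hv : (((y + c).val : ℤ)) ≡ ((y.val : ℤ) + 2 ^ (j + 1)) [ZMOD ((2:ℤ) ^ (j + 2))] := by
      have h := val_add_modEq y c
      rw [hcval] at h
      have hcc : ((2 ^ (j + 2) : ℕ) : ℤ) = (2:ℤ) ^ (j + 2) := by push_cast; ring
      rw [hcc] at h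
      simpa using h
    have h1 : Ef a (((y + c).val : ℤ)) ≡ Ef a ((y.val : ℤ) + 2 ^ (j + 1))
        [ZMOD ((2:ℤ) ^ (j + 3))] := by
      have := E_congr (K := j + 2) (by omega) a hv
      simpa using this
    have h3 : Ef a ((y.val : ℤ) + 2 ^ (j + 1)) ≡ Ef a ((y.val : ℤ)) + (-a) * 2 ^ (j + 2)
        [ZMOD ((2:ℤ) ^ (j + 3))] := by
      rw [Int.modEq_iff_dvd]
      refine ⟨-((y.val : ℤ) + 2 ^ j), ?_⟩
      unfold Ef
      ring
    have h4 := h1.trans h3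
    have h5 : ee (j + 3) (Ef a ((y.val : ℤ)) + (-a) * 2 ^ (j + 2))
        = - ee (j + 3) (Ef a ((y.val : ℤ))) := by
      rw [ee_add, ee_int_mul]
      rw [show (j + 3) = (j + 2) + 1 from rfl, ee_half_neg_one (j + 2),
        Odd.neg_one_zpow ha.neg, mul_neg_one]
    rw [show (j + 1 + 2) = j + 3 from rfl] at *
    rw [ee_congr h4, h5]
  have hsum : ∑ y : ZMod (2 ^ (j + 2)), ee (j + 3) (Ef a (((y + c).val : ℤ)))
      = ∑ y : ZMod (2 ^ (j + 2)), ee (j + 3) (Ef a ((y.val : ℤ))) :=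
    Fintype.sum_equiv (Equiv.addRight c) _ _ (fun y => rfl)
  have hkey : ∑ y : ZMod (2 ^ (j + 2)), ee (j + 3) (Ef a ((y.val : ℤ)))
      = - ∑ y : ZMod (2 ^ (j + 2)), ee (j + 3) (Ef a ((y.val : ℤ))) := by
    calc ∑ y : ZMod (2 ^ (j + 2)), ee (j + 3) (Ef a ((y.val : ℤ)))
        = ∑ y : ZMod (2 ^ (j + 2)), ee (j + 3) (Ef a (((y + c).val : ℤ))) := hsum.symm
      _ = ∑ y : ZMod (2 ^ (j + 2)), - ee (j + 3) (Ef a ((y.val : ℤ))) :=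
          Finset.sum_congr rfl fun y _ => hshift y
      _ = - ∑ y : ZMod (2 ^ (j + 2)), ee (j + 3) (Ef a ((y.val : ℤ))) := by
          rw [Finset.sum_neg_distrib]
  have h2 : (2:ℂ) * ∑ y : ZMod (2 ^ (j + 2)), ee (j + 3) (Ef a ((y.val : ℤ))) = 0 := by
    rw [two_mul]
    nth_rewrite 1 [hkey]
    ring
  rcases mul_eq_zero.mp h2 with h | h
  · norm_num at h
  · simpa using h

lemma fold_J (k : ℕ) (hk : 1 ≤ k) :
    ∑ y : ZMod (2 ^ (k + 1)), ee (k + 1) ((y.val : ℤ) * (y.val : ℤ)) = 2 * gg k := by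
  obtain ⟨j, rfl⟩ : ∃ j, k = j + 1 := ⟨k - 1, by omega⟩
  have hpow : (2:ℕ) ^ (j + 1) < 2 ^ (j + 2) := Nat.pow_lt_pow_succ one_lt_two
  rw [← Finset.sum_filter_add_sum_filter_not Finset.univ
    (fun y : ZMod (2 ^ (j + 2)) => y.val < 2 ^ (j + 1))]
  have h1 : ∑ y ∈ Finset.univ.filter (fun y : ZMod (2 ^ (j + 2)) => y.val < 2 ^ (j + 1)),
      ee (j + 2) ((y.val : ℤ) * (y.val : ℤ))
      = ∑ w : ZMod (2 ^ (j + 1)), ee (j + 2) ((w.val : ℤ) * (w.val : ℤ)) := by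
    apply Finset.sum_nbij' (fun y => ((y.val : ℕ) : ZMod (2 ^ (j + 1))))
      (fun w => ((w.val : ℕ) : ZMod (2 ^ (j + 2))))
    · intro a _; exact Finset.mem_univ _
    · intro w _
      simp only [Finset.mem_filter, Finset.mem_univ, true_and]
      rw [ZMod.val_cast_of_lt (lt_trans (ZMod.val_lt w) hpow)]
      exact ZMod.val_lt w
    · intro y hy
      simp only [Finset.mem_filter, Finset.mem_univ, true_and] at hy
      rw [ZMod.val_cast_of_lt hy]
      exact ZMod.natCast_rightInverse y
    · intro w _
      rw [ZMod.val_cast_of_lt (lt_trans (ZMod.val_lt w) hpow)]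
      exact ZMod.natCast_rightInverse w
    · intro y hy
      simp only [Finset.mem_filter, Finset.mem_univ, true_and] at hy
      rw [ZMod.val_cast_of_lt hy]
  have h2 : ∑ y ∈ Finset.univ.filter (fun y : ZMod (2 ^ (j + 2)) => ¬ y.val < 2 ^ (j + 1)),
      ee (j + 2) ((y.val : ℤ) * (y.val : ℤ))
      = ∑ w : ZMod (2 ^ (j + 1)), ee (j + 2) ((w.val : ℤ) * (w.val : ℤ)) := by
    apply Finset.sum_nbij' (fun y => ((y.val - 2 ^ (j + 1) : ℕ) : ZMod (2 ^ (j + 1))))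
      (fun w => ((w.val + 2 ^ (j + 1) : ℕ) : ZMod (2 ^ (j + 2))))
    · intro a _; exact Finset.mem_univ _
    · intro w _
      simp only [Finset.mem_filter, Finset.mem_univ, true_and]
      have : w.val + 2 ^ (j + 1) < 2 ^ (j + 2) := by
        have := ZMod.val_lt w
        have h22 : (2:ℕ) ^ (j + 2) = 2 ^ (j + 1) + 2 ^ (j + 1) := by ring
        omega
      rw [ZMod.val_cast_of_lt this]
      omega
    · intro y hy
      simp only [Finset.mem_filter, Finset.mem_univ, true_and] at hy
      have hlt : y.val - 2 ^ (j + 1) < 2 ^ (j + 1) := by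
        have := ZMod.val_lt y
        have h22 : (2:ℕ) ^ (j + 2) = 2 ^ (j + 1) + 2 ^ (j + 1) := by ring
        omega
      rw [ZMod.val_cast_of_lt hlt]
      have : y.val - 2 ^ (j + 1) + 2 ^ (j + 1) = y.val := by omega
      rw [this]
      exact ZMod.natCast_rightInverse y
    · intro w _
      have hlt : w.val + 2 ^ (j + 1) < 2 ^ (j + 2) := by
        have := ZMod.val_lt w
        have h22 : (2:ℕ) ^ (j + 2) = 2 ^ (j + 1) + 2 ^ (j + 1) := by ring
        omega
      rw [ZMod.val_cast_of_lt hlt]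
      have : w.val + 2 ^ (j + 1) - 2 ^ (j + 1) = w.val := by omega
      rw [this]
      exact ZMod.natCast_rightInverse w
    · intro y hy
      simp only [Finset.mem_filter, Finset.mem_univ, true_and] at hy
      have hlt : y.val - 2 ^ (j + 1) < 2 ^ (j + 1) := by
        have := ZMod.val_lt y
        have h22 : (2:ℕ) ^ (j + 2) = 2 ^ (j + 1) + 2 ^ (j + 1) := by ring
        omega
      apply ee_congr
      rw [ZMod.val_cast_of_lt hlt]
      have hy2 : ((y.val - 2 ^ (j + 1) : ℕ) : ℤ) = (y.val : ℤ) - 2 ^ (j + 1) := by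
        push_cast [Nat.cast_sub (le_of_not_gt hy)]
        ring
      rw [hy2, Int.modEq_iff_dvd]
      exact ⟨-((y.val:ℤ) - 2 ^ (j + 1) + 2 ^ j), by ring⟩
  rw [h1, h2, gg]
  ring

lemma inner_even (k : ℕ) (hk : 1 ≤ k) (w : ZMod (2 ^ k)) :
    ∑ y : ZMod (2 ^ (k + 1)), ee (k + 2) (Ef (2 * (w.val : ℤ)) ((y.val : ℤ)))
    = ee (k + 1) ((w.val : ℤ) * (w.val : ℤ)) * (2 * gg k) := by
  set W : ℤ := (w.val : ℤ) with hW
  set c : ZMod (2 ^ (k + 1)) := ((w.val : ℕ) : ZMod (2 ^ (k + 1))) with hc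
  have hshift : ∀ y : ZMod (2 ^ (k + 1)),
      ee (k + 2) (Ef (2 * W) (((y + c).val : ℤ)))
      = ee (k + 1) (W * W) * ee (k + 1) ((y.val : ℤ) * (y.val : ℤ)) := by
    intro y
    have hcval : (c.val : ℤ) = W := by
      rw [hc, hW]
      norm_cast
      exact ZMod.val_cast_of_lt (lt_trans (ZMod.val_lt w) (Nat.pow_lt_pow_succ one_lt_two))
    have hv : (((y + c).val : ℤ)) ≡ ((y.val : ℤ) + W) [ZMOD ((2:ℤ) ^ (k + 1))] := by
      have h := val_add_modEq y c
      rw [hcval] at h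
      have hcc : ((2 ^ (k + 1) : ℕ) : ℤ) = (2:ℤ) ^ (k + 1) := by push_cast; ring
      rw [hcc] at h
      exact h
    have h1 : Ef (2 * W) (((y + c).val : ℤ)) ≡ Ef (2 * W) ((y.val : ℤ) + W)
        [ZMOD ((2:ℤ) ^ (k + 2))] := by
      have := E_congr (K := k + 1) (by omega) (2 * W) hv
      simpa using this
    have h2 : Ef (2 * W) ((y.val : ℤ) + W)
        = 2 * (W * W) + 2 * ((y.val : ℤ) * (y.val : ℤ)) := by
      unfold Ef; ring
    rw [ee_congr h1, h2, ee_add]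
    rw [show (k + 2) = (k + 1) + 1 from rfl, ee_succ_two_mul, ee_succ_two_mul]
  have hsum : ∑ y : ZMod (2 ^ (k + 1)), ee (k + 2) (Ef (2 * W) (((y + c).val : ℤ)))
      = ∑ y : ZMod (2 ^ (k + 1)), ee (k + 2) (Ef (2 * W) ((y.val : ℤ))) :=
    Fintype.sum_equiv (Equiv.addRight c) _ _ (fun y => rfl)
  rw [← hsum]
  rw [Finset.sum_congr rfl (fun y _ => hshift y)]
  rw [← Finset.mul_sum, fold_J k hk]

lemma gg_step (k : ℕ) (hk : 1 ≤ k) : gg (k + 1) ^ 2 = 2 * gg k ^ 2 := by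
  have h1 : gg (k + 1) ^ 2
      = ∑ u : ZMod (2 ^ (k + 1)), ∑ y : ZMod (2 ^ (k + 1)),
          ee (k + 2) (Ef ((u.val : ℤ)) ((y.val : ℤ))) := by
    rw [gg, sq, Finset.sum_mul_sum]
    have hxy : ∀ x y : ZMod (2 ^ (k + 1)),
        ee (k + 2) ((x.val : ℤ) * (x.val : ℤ)) * ee (k + 2) ((y.val : ℤ) * (y.val : ℤ))
        = ee (k + 2) ((x.val : ℤ) * (x.val : ℤ) + (y.val : ℤ) * (y.val : ℤ)) := by
      intro x y; rw [ee_add]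
    calc (∑ x : ZMod (2 ^ (k + 1)), ∑ y : ZMod (2 ^ (k + 1)),
            ee (k + 2) ((x.val : ℤ) * (x.val : ℤ)) * ee (k + 2) ((y.val : ℤ) * (y.val : ℤ)))
        = ∑ y : ZMod (2 ^ (k + 1)), ∑ x : ZMod (2 ^ (k + 1)),
            ee (k + 2) ((x.val : ℤ) * (x.val : ℤ) + (y.val : ℤ) * (y.val : ℤ)) := by
          rw [Finset.sum_comm]
          exact Finset.sum_congr rfl fun y _ => Finset.sum_congr rfl fun x _ => hxy x y
      _ = ∑ y : ZMod (2 ^ (k + 1)), ∑ u : ZMod (2 ^ (k + 1)),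
            ee (k + 2) (Ef ((u.val : ℤ)) ((y.val : ℤ))) := by
          refine Finset.sum_congr rfl fun y _ => ?_
          refine (Fintype.sum_equiv (Equiv.subRight y)
            (fun u => ee (k + 2) (Ef ((u.val : ℤ)) ((y.val : ℤ))))
            (fun x => ee (k + 2) ((x.val : ℤ) * (x.val : ℤ) + (y.val : ℤ) * (y.val : ℤ)))
            ?_).symm
          intro u
          show ee (k + 2) (Ef ((u.val : ℤ)) ((y.val : ℤ)))
            = ee (k + 2) (((u - y).val : ℤ) * ((u - y).val : ℤ) + (y.val : ℤ) * (y.val : ℤ))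
          apply ee_congr
          have hsub := val_sub_modEq u y
          have hcc : ((2 ^ (k + 1) : ℕ) : ℤ) = (2:ℤ) ^ (k + 1) := by push_cast; ring
          rw [hcc] at hsub
          have hsq := sq_congr (by omega : 1 ≤ k + 1) hsub.symm
          have := hsq.add_right ((y.val : ℤ) * (y.val : ℤ))
          have heq : ((u.val : ℤ) - (y.val : ℤ)) * ((u.val : ℤ) - (y.val : ℤ))
              + (y.val : ℤ) * (y.val : ℤ) = Ef ((u.val : ℤ)) ((y.val : ℤ)) := by
            unfold Ef; ring
          rw [heq] at this
          exact this
      _ = ∑ u : ZMod (2 ^ (k + 1)), ∑ y : ZMod (2 ^ (k + 1)),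
            ee (k + 2) (Ef ((u.val : ℤ)) ((y.val : ℤ))) := Finset.sum_comm
  rw [h1]
  rw [← Finset.sum_filter_add_sum_filter_not Finset.univ
    (fun u : ZMod (2 ^ (k + 1)) => Even u.val)]
  have hodd : ∑ u ∈ Finset.univ.filter (fun u : ZMod (2 ^ (k + 1)) => ¬ Even u.val),
      ∑ y : ZMod (2 ^ (k + 1)), ee (k + 2) (Ef ((u.val : ℤ)) ((y.val : ℤ))) = 0 := by
    apply Finset.sum_eq_zero
    intro u hu
    simp only [Finset.mem_filter, Finset.mem_univ, true_and] at hu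
    exact inner_odd_zero k hk ((u.val : ℤ)) (by exact_mod_cast Nat.not_even_iff_odd.mp hu)
  have heven : ∑ u ∈ Finset.univ.filter (fun u : ZMod (2 ^ (k + 1)) => Even u.val),
      ∑ y : ZMod (2 ^ (k + 1)), ee (k + 2) (Ef ((u.val : ℤ)) ((y.val : ℤ)))
      = ∑ w : ZMod (2 ^ k), ∑ y : ZMod (2 ^ (k + 1)),
          ee (k + 2) (Ef (2 * (w.val : ℤ)) ((y.val : ℤ))) := by
    have hpow2 : (2:ℕ) ^ (k + 1) = 2 ^ k + 2 ^ k := by ring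
    apply Finset.sum_nbij' (fun u => ((u.val / 2 : ℕ) : ZMod (2 ^ k)))
      (fun w => ((2 * w.val : ℕ) : ZMod (2 ^ (k + 1))))
    · intro a _; exact Finset.mem_univ _
    · intro w _
      simp only [Finset.mem_filter, Finset.mem_univ, true_and]
      have hlt : 2 * w.val < 2 ^ (k + 1) := by
        have := ZMod.val_lt w; omega
      rw [ZMod.val_cast_of_lt hlt]
      exact ⟨w.val, by ring⟩
    · intro u hu
      simp only [Finset.mem_filter, Finset.mem_univ, true_and] at hu
      obtain ⟨r, hr⟩ := hu
      have hlt : u.val / 2 < 2 ^ k := by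
        have := ZMod.val_lt u; omega
      rw [ZMod.val_cast_of_lt hlt]
      have : 2 * (u.val / 2) = u.val := by omega
      rw [this]
      exact ZMod.natCast_rightInverse u
    · intro w _
      have hlt : 2 * w.val < 2 ^ (k + 1) := by
        have := ZMod.val_lt w; omega
      rw [ZMod.val_cast_of_lt hlt]
      have : (2 * w.val) / 2 = w.val := by omega
      rw [this]
      exact ZMod.natCast_rightInverse w
    · intro u hu
      simp only [Finset.mem_filter, Finset.mem_univ, true_and] at hu
      obtain ⟨r, hr⟩ := hu
      have hlt : u.val / 2 < 2 ^ k := by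
        have := ZMod.val_lt u; omega
      refine Finset.sum_congr rfl fun y _ => ?_
      congr 1
      rw [ZMod.val_cast_of_lt hlt]
      have : 2 * ((u.val / 2 : ℕ) : ℤ) = (u.val : ℤ) := by
        have : 2 * (u.val / 2) = u.val := by omega
        exact_mod_cast congrArg (Nat.cast : ℕ → ℤ) this
      rw [this]
  rw [hodd, add_zero, heven]
  have : ∀ w : ZMod (2 ^ k), ∑ y : ZMod (2 ^ (k + 1)),
      ee (k + 2) (Ef (2 * (w.val : ℤ)) ((y.val : ℤ)))
      = ee (k + 1) ((w.val : ℤ) * (w.val : ℤ)) * (2 * gg k) :=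
    inner_even k hk
  rw [Finset.sum_congr rfl (fun w _ => this w), ← Finset.sum_mul]
  rw [← gg]
  ring

lemma z_sq : ee 2 1 ^ 2 = -1 := by
  rw [sq, ← ee_add]
  rw [show (1:ℤ) + 1 = 2 * 1 from rfl, ee_succ_two_mul]
  simpa using ee_half_neg_one 0

lemma gg_one_sq : gg 1 ^ 2 = 2 * ee 2 1 := by
  have h : gg 1 = 1 + ee 2 1 := by
    rw [gg]
    rw [show (Finset.univ : Finset (ZMod (2 ^ 1))) = {0, 1} from by decide]
    rw [Finset.sum_pair (by decide)]
    rw [show (0 : ZMod (2 ^ 1)).val = 0 from by decide]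
    rw [show (1 : ZMod (2 ^ 1)).val = 1 from by decide]
    norm_num [ee_zero]
  rw [h]
  have h2 := z_sq
  ring_nf
  ring_nf at h2
  rw [show (1:ℂ) + ee 2 1 * 2 + ee 2 1 ^ 2 = 1 + ee 2 1 * 2 + (ee 2 1 ^2) from rfl, h2]
  ring

lemma gg_sq (m : ℕ) (hm : 1 ≤ m) : gg m ^ 2 = 2 ^ m * ee 2 1 := by
  induction m with
  | zero => omega
  | succ k ih =>
    rcases Nat.eq_or_lt_of_le hm with h | h
    · obtain rfl : k = 0 := by omega
      simpa using gg_one_sq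
    · have hk : 1 ≤ k := by omega
      rw [gg_step k hk, ih hk]
      ring


section codes
variable {m n : ℕ}

def ipz (u v : Fin n → ZMod (2 ^ m)) : ℤ := ∑ i, ((u i).val : ℤ) * ((v i).val : ℤ)

lemma ipz_comm (u v : Fin n → ZMod (2 ^ m)) : ipz u v = ipz v u := by
  unfold ipz; congr 1; ext i; ring

lemma ipz_add_left (u v w : Fin n → ZMod (2 ^ m)) :
    ipz (u + v) w ≡ ipz u w + ipz v w [ZMOD ((2:ℤ) ^ m)] := by
  unfold ipz
  rw [← Finset.sum_add_distrib]
  apply sum_modEq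
  intro i _
  have h := (val_add_modEq (u i) (v i)).mul_right ((w i).val : ℤ)
  have hcc : ((2 ^ m : ℕ) : ℤ) = (2:ℤ) ^ m := by push_cast; ring
  rw [hcc] at h
  simpa [add_mul] using h

lemma cast_ipz (u v : Fin n → ZMod (2 ^ m)) :
    ((ipz u v : ℤ) : ZMod (2 ^ m)) = dotp u v := by
  unfold ipz dotp
  push_cast
  simp [ZMod.natCast_val, ZMod.cast_id]

lemma dotp_eq_zero_iff (u v : Fin n → ZMod (2 ^ m)) :
    dotp u v = 0 ↔ ((2:ℤ) ^ m) ∣ ipz u v := by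
  rw [← cast_ipz, ZMod.intCast_zmod_eq_zero_iff_dvd]
  push_cast
  rfl

lemma dotp_comm {R : Type*} [CommRing R] (u v : Fin n → R) : dotp u v = dotp v u := by
  unfold dotp; congr 1; ext i; ring

lemma dotp_add_left {R : Type*} [CommRing R] (u v w : Fin n → R) :
    dotp (u + v) w = dotp u w + dotp v w := by
  unfold dotp
  rw [← Finset.sum_add_distrib]
  congr 1; ext i; simp [add_mul]

def qv (v : Fin n → ZMod (2 ^ m)) : ℤ := ipz v v

lemma qv_add (hm : 1 ≤ m) (u v : Fin n → ZMod (2 ^ m)) :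
    qv (u + v) ≡ qv u + qv v + 2 * ipz u v [ZMOD ((2:ℤ) ^ (m + 1))] := by
  unfold qv ipz
  have hh : (∑ i, ((u i).val : ℤ) * ((u i).val : ℤ)) + (∑ i, ((v i).val : ℤ) * ((v i).val : ℤ))
      + 2 * ∑ i, ((u i).val : ℤ) * ((v i).val : ℤ)
      = ∑ i, ((((u i).val : ℤ) + ((v i).val : ℤ)) * (((u i).val : ℤ) + ((v i).val : ℤ))) := by
    rw [Finset.mul_sum, ← Finset.sum_add_distrib, ← Finset.sum_add_distrib]
    congr 1; ext i; ring
  rw [hh]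
  apply sum_modEq
  intro i _
  have h := val_add_modEq (u i) (v i)
  have hcc : ((2 ^ m : ℕ) : ℤ) = (2:ℤ) ^ m := by push_cast; ring
  rw [hcc] at h
  exact sq_congr hm h

lemma qv_neg_modEq (hm : 1 ≤ m) (v : Fin n → ZMod (2 ^ m)) :
    qv (-v) ≡ qv v [ZMOD ((2:ℤ) ^ (m + 1))] := by
  unfold qv ipz
  apply sum_modEq
  intro i _
  have h : (((-v) i).val : ℤ) ≡ -((v i).val : ℤ) [ZMOD ((2:ℤ) ^ m)] := by
    have h0 : (-v) i + v i = 0 := by simp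
    have h1 := val_add_modEq ((-v) i) (v i)
    rw [h0] at h1
    have hcc : ((2 ^ m : ℕ) : ℤ) = (2:ℤ) ^ m := by push_cast; ring
    rw [hcc] at h1
    simp only [ZMod.val_zero, Nat.cast_zero] at h1
    have := h1.symm.add_right (-((v i).val : ℤ))
    simpa using this
  have := sq_congr hm h
  simpa using this

lemma wtE_modEq (hm : 1 ≤ m) (a : ZMod (2 ^ m)) :
    ((wtE a : ℤ)) ≡ (a.val : ℤ) * (a.val : ℤ) [ZMOD ((2:ℤ) ^ (m + 1))] := by
  unfold wtE
  have hva : a.val ≤ 2 ^ m := le_of_lt (ZMod.val_lt a)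
  have hcast : ((min (a.val ^ 2) ((2 ^ m - a.val) ^ 2) : ℕ) : ℤ)
      = min ((a.val : ℤ) ^ 2) (((2 ^ m : ℤ) - (a.val : ℤ)) ^ 2) := by
    push_cast [Nat.cast_sub hva]
    rfl
  rw [hcast]
  have hneg : ((2 ^ m : ℤ) - (a.val : ℤ)) ≡ (- (a.val : ℤ)) [ZMOD ((2:ℤ) ^ m)] := by
    rw [Int.modEq_iff_dvd]; exact ⟨-1, by ring⟩
  have hsq : ((2 ^ m : ℤ) - (a.val : ℤ)) * ((2 ^ m : ℤ) - (a.val : ℤ))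
      ≡ (a.val : ℤ) * (a.val : ℤ) [ZMOD ((2:ℤ) ^ (m + 1))] := by
    have := sq_congr hm hneg
    simpa using this
  rcases min_cases ((a.val : ℤ) ^ 2) (((2 ^ m : ℤ) - (a.val : ℤ)) ^ 2) with ⟨h, _⟩ | ⟨h, _⟩
  · rw [h, pow_two]
  · rw [h, pow_two]; exact hsq

lemma wtEv_modEq (hm : 1 ≤ m) (v : Fin n → ZMod (2 ^ m)) :
    ((wtEv v : ℤ)) ≡ qv v [ZMOD ((2:ℤ) ^ (m + 1))] := by
  unfold wtEv qv ipz
  push_cast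
  exact sum_modEq fun i _ => wtE_modEq hm (v i)

/-- character sum over a (finite) subgroup -/
lemma char_sum (H : Finset (Fin n → ZMod (2 ^ m)))
    (hadd : ∀ a ∈ H, ∀ b ∈ H, a + b ∈ H) (hneg : ∀ a ∈ H, -a ∈ H)
    (u : Fin n → ZMod (2 ^ m)) :
    ∑ c ∈ H, ee m (ipz c u) = if (∀ c ∈ H, dotp c u = 0) then (H.card : ℂ) else 0 := by
  split_ifs with hcond
  · rw [Finset.sum_congr rfl (fun c hc => (ee_eq_one_iff m (ipz c u)).2
      ((dotp_eq_zero_iff c u).1 (hcond c hc)))]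
    simp
  · push_neg at hcond
    obtain ⟨c₀, hc₀H, hc₀⟩ := hcond
    have hζ : ee m (ipz c₀ u) ≠ 1 := by
      intro h
      exact hc₀ ((dotp_eq_zero_iff c₀ u).2 ((ee_eq_one_iff m (ipz c₀ u)).1 h))
    have hshift : ∑ c ∈ H, ee m (ipz (c + c₀) u) = ∑ c ∈ H, ee m (ipz c u) := by
      apply Finset.sum_nbij' (fun c => c + c₀) (fun c => c - c₀)
      · intro a ha; exact hadd a ha c₀ hc₀H
      · intro a ha
        rw [sub_eq_add_neg]
        exact hadd a ha (-c₀) (hneg c₀ hc₀H)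
      · intro a _; simp
      · intro a _; simp
      · intro a _; rfl
    have hfac : ∀ c ∈ H, ee m (ipz (c + c₀) u)
        = ee m (ipz c u) * ee m (ipz c₀ u) := by
      intro c _
      rw [← ee_add]
      exact ee_congr (ipz_add_left c c₀ u)
    rw [Finset.sum_congr rfl hfac, ← Finset.sum_mul] at hshift
    have h0 : (∑ c ∈ H, ee m (ipz c u)) * (ee m (ipz c₀ u) - 1) = 0 := by
      rw [mul_sub, hshift]; ring
    rcases mul_eq_zero.mp h0 with h | h
    · exact h
    · exact absurd (by linear_combination h) hζ

/-- full-space character sum -/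
lemma full_char_sum (c : Fin n → ZMod (2 ^ m)) :
    ∑ u : Fin n → ZMod (2 ^ m), ee m (ipz c u)
    = if c = 0 then (((2 ^ m) ^ n : ℕ) : ℂ) else 0 := by
  have huniv := char_sum (m := m) (n := n) Finset.univ
    (fun a _ b _ => Finset.mem_univ _) (fun a _ => Finset.mem_univ _) c
  split_ifs with hc
  · subst hc
    have h1 : ∀ u : Fin n → ZMod (2 ^ m), ee m (ipz (0 : Fin n → ZMod (2 ^ m)) u) = 1 := by
      intro u
      have h0 : ipz (0 : Fin n → ZMod (2 ^ m)) u = 0 := by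
        unfold ipz
        simp
      rw [h0, ee_zero]
    rw [Finset.sum_congr rfl (fun u _ => h1 u)]
    simp [Finset.card_univ]
  · have hcond : ¬ (∀ u ∈ (Finset.univ : Finset (Fin n → ZMod (2 ^ m))), dotp u c = 0) := by
      intro hall
      apply hc
      have hip : ∀ i : Fin n, c i = 0 := by
        intro i
        have := hall (Pi.single i 1) (Finset.mem_univ _)
        rw [show dotp (Pi.single i 1) c = c i from ?_] at this
        · exact this
        · unfold dotp
          simp [Pi.single_apply, ite_mul]
      funext i
      exact hip i
    rw [if_neg hcond] at huniv
    rw [← huniv]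
    apply Finset.sum_congr rfl
    intro u _
    rw [ipz_comm]

lemma perp_card (H : Finset (Fin n → ZMod (2 ^ m)))
    (hadd : ∀ a ∈ H, ∀ b ∈ H, a + b ∈ H) (hneg : ∀ a ∈ H, -a ∈ H) (h0 : (0:Fin n → ZMod (2 ^ m)) ∈ H) :
    H.card * ((Finset.univ.filter
      (fun u : Fin n → ZMod (2 ^ m) => ∀ c ∈ H, dotp c u = 0)).card) = (2 ^ m) ^ n := by
  have hT : ∑ c ∈ H, ∑ u : Fin n → ZMod (2 ^ m), ee m (ipz c u) = (((2 ^ m) ^ n : ℕ) : ℂ) := by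
    rw [Finset.sum_congr rfl (fun c _ => full_char_sum c)]
    rw [Finset.sum_ite_eq' H 0 (fun _ => (((2 ^ m) ^ n : ℕ) : ℂ))]
    rw [if_pos h0]
  rw [Finset.sum_comm] at hT
  have h2 : ∀ u : Fin n → ZMod (2 ^ m), ∑ c ∈ H, ee m (ipz c u)
      = if (∀ c ∈ H, dotp c u = 0) then (H.card : ℂ) else 0 := fun u => char_sum H hadd hneg u
  rw [Finset.sum_congr rfl (fun u _ => h2 u)] at hT
  rw [Finset.sum_ite, Finset.sum_const, Finset.sum_const_zero, add_zero] at hT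
  have hfin : ((H.card * ((Finset.univ.filter
      (fun u : Fin n → ZMod (2 ^ m) => ∀ c ∈ H, dotp c u = 0)).card) : ℕ) : ℂ)
      = (((2 ^ m) ^ n : ℕ) : ℂ) := by
    rw [nsmul_eq_mul] at hT
    rw [← hT]
    push_cast
    ring
  exact_mod_cast hfin

lemma master_identity (hm : 1 ≤ m) (H : Finset (Fin n → ZMod (2 ^ m)))
    (hadd : ∀ a ∈ H, ∀ b ∈ H, a + b ∈ H) (hneg : ∀ a ∈ H, -a ∈ H)
    (h0 : (0:Fin n → ZMod (2 ^ m)) ∈ H)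
    (hq : ∀ c ∈ H, ((2:ℤ) ^ (m+1)) ∣ qv c) :
    ∑ u ∈ Finset.univ.filter (fun u : Fin n → ZMod (2 ^ m) => ∀ c ∈ H, dotp c u = 0),
      ee (m+1) (qv u)
    = ∑ u : Fin n → ZMod (2 ^ m), ee (m+1) (qv u) := by
  have way1 : ∀ c ∈ H, ∑ u : Fin n → ZMod (2 ^ m), ee (m+1) (qv u + 2 * ipz u c)
      = ∑ u : Fin n → ZMod (2 ^ m), ee (m+1) (qv u) := by
    intro c hc
    have hpt : ∀ u : Fin n → ZMod (2 ^ m),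
        ee (m+1) (qv u + 2 * ipz u c) = ee (m+1) (qv (u + c)) := by
      intro u
      apply ee_congr
      have h1 := qv_add hm u c
      have h2 : qv u + qv c + 2 * ipz u c ≡ qv u + 2 * ipz u c [ZMOD ((2:ℤ) ^ (m+1))] := by
        rw [Int.modEq_iff_dvd]
        obtain ⟨d, hd⟩ := hq c hc
        exact ⟨-d, by rw [show qv u + 2 * ipz u c - (qv u + qv c + 2 * ipz u c) = -(qv c) from by ring, hd]; ring⟩
      exact (h1.trans h2).symm
    rw [Finset.sum_congr rfl (fun u _ => hpt u)]
    exact Fintype.sum_equiv (Equiv.addRight c) _ _ (fun u => rfl)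
  have way2 : ∀ u : Fin n → ZMod (2 ^ m), ∀ c ∈ H,
      ee (m+1) (qv u + 2 * ipz u c) = ee (m+1) (qv u) * ee m (ipz c u) := by
    intro u c _
    rw [ee_add, ee_succ_two_mul, ipz_comm]
  have hT1 : ∑ c ∈ H, ∑ u : Fin n → ZMod (2 ^ m), ee (m+1) (qv u + 2 * ipz u c)
      = (H.card : ℂ) * ∑ u : Fin n → ZMod (2 ^ m), ee (m+1) (qv u) := by
    rw [Finset.sum_congr rfl way1, Finset.sum_const, nsmul_eq_mul]
  have hT2 : ∑ c ∈ H, ∑ u : Fin n → ZMod (2 ^ m), ee (m+1) (qv u + 2 * ipz u c)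
      = (H.card : ℂ) * ∑ u ∈ Finset.univ.filter
          (fun u : Fin n → ZMod (2 ^ m) => ∀ c ∈ H, dotp c u = 0), ee (m+1) (qv u) := by
    rw [Finset.sum_comm]
    have hinner : ∀ u : Fin n → ZMod (2 ^ m),
        ∑ c ∈ H, ee (m+1) (qv u + 2 * ipz u c)
        = ee (m+1) (qv u) * (if (∀ c ∈ H, dotp c u = 0) then (H.card : ℂ) else 0) := by
      intro u
      rw [Finset.sum_congr rfl (way2 u), ← Finset.mul_sum, char_sum H hadd hneg u]
    rw [Finset.sum_congr rfl (fun u _ => hinner u)]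
    rw [Finset.sum_congr rfl (fun u _ => (mul_ite _ _ _ _ : _ = _)), Finset.sum_ite]
    simp [Finset.mul_sum, mul_comm]
  have hcard : (H.card : ℂ) ≠ 0 := by
    exact_mod_cast Nat.cast_ne_zero.mpr (Finset.card_ne_zero_of_mem h0)
  have := hT1.symm.trans hT2
  exact (mul_left_cancel₀ hcard this).symm

lemma ee_sum (k : ℕ) {ι : Type*} (s : Finset ι) (f : ι → ℤ) :
    ee k (∑ i ∈ s, f i) = ∏ i ∈ s, ee k (f i) := by
  induction s using Finset.cons_induction with
  | empty => simp [ee_zero]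
  | cons a s ha ih => rw [Finset.sum_cons, Finset.prod_cons, ee_add, ih]

lemma gamma_eq : ∑ u : Fin n → ZMod (2 ^ m), ee (m+1) (qv u) = (gg m) ^ n := by
  have h1 : ∀ u : Fin n → ZMod (2 ^ m),
      ee (m+1) (qv u) = ∏ i, ee (m+1) (((u i).val : ℤ) * ((u i).val : ℤ)) := by
    intro u; rw [qv, ipz, ee_sum]
  rw [Finset.sum_congr rfl (fun u _ => h1 u)]
  have h2 := Finset.prod_univ_sum (fun _ : Fin n => (Finset.univ : Finset (ZMod (2 ^ m))))
    (fun i x => ee (m+1) ((x.val : ℤ) * (x.val : ℤ)))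
  rw [← Fintype.piFinset_univ, ← h2, gg]
  rw [Finset.prod_const, Finset.card_univ, Fintype.card_fin]

lemma dotp_add_right {R : Type*} [CommRing R] (u v w : Fin n → R) :
    dotp u (v + w) = dotp u v + dotp u w := by
  rw [dotp_comm, dotp_add_left, dotp_comm v u, dotp_comm w u]

lemma dvd_congr_modEq {a b c : ℤ} (h : a ≡ b [ZMOD c]) : c ∣ a ↔ c ∣ b := by
  constructor
  · intro hd
    have h' : c ∣ b - a := Int.modEq_iff_dvd.1 h
    have := dvd_add hd h'
    simpa using this
  · intro hd
    have h' : c ∣ a - b := Int.modEq_iff_dvd.1 h.symm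
    have := dvd_add hd h'
    simpa using this

lemma half_mod {k : ℕ} {a : ℤ} (h1 : (2:ℤ) ^ k ∣ a) (h2 : ¬ (2:ℤ) ^ (k+1) ∣ a) :
    a ≡ 2 ^ k [ZMOD ((2:ℤ) ^ (k+1))] := by
  obtain ⟨b, rfl⟩ := h1
  rcases Int.even_or_odd b with ⟨c, rfl⟩ | ⟨c, rfl⟩
  · exact absurd ⟨c, by ring⟩ h2
  · rw [Int.modEq_iff_dvd]
    exact ⟨-c, by ring⟩

lemma zmod_add_self {k : ℕ} (x : ZMod (2 ^ (k+1))) (h : x + x = 0) (hx : x ≠ 0) :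
    x = 2 ^ k := by
  have hval : ((x.val + x.val : ℕ) : ZMod (2 ^ (k+1))) = 0 := by
    push_cast
    rw [ZMod.natCast_val, ZMod.cast_id, h]
  rw [ZMod.natCast_eq_zero_iff] at hval
  have hlt := ZMod.val_lt x
  have hne : x.val ≠ 0 := fun h0 => hx ((ZMod.val_eq_zero x).1 h0)
  have hsplit : (2:ℕ) ^ (k+1) = 2 ^ k + 2 ^ k := by ring
  have hvv : x.val = 2 ^ k := by
    obtain ⟨d, hd⟩ := hval
    rcases d with _ | _ | d
    · omega
    · omega
    · exfalso
      have h4 : 2 ^ (k+1) * 2 ≤ 2 ^ (k+1) * (d+1+1) := Nat.mul_le_mul_left _ (by omega)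
      omega
  have := ZMod.natCast_rightInverse x
  rw [← this, hvv]
  push_cast
  ring


end codes
section main
variable {j n : ℕ} (C : AddSubgroup (Fin n → ZMod (2 ^ (j + 1))))

lemma mem_deSub_iff
    (c : Fin n → ZMod (2 ^ (j + 1))) :
    c ∈ deSub (j+1) n C ↔ c ∈ C ∧ ((2:ℤ) ^ (j+2)) ∣ qv c := by
  unfold deSub
  simp only [Set.mem_setOf_eq]
  constructor
  · rintro ⟨h1, h2⟩
    refine ⟨h1, ?_⟩
    rw [← dvd_congr_modEq (wtEv_modEq (by omega) c)]
    have : ((2:ℤ) ^ (j+2)) = ((2 ^ (j+1+1) : ℕ) : ℤ) := by push_cast; ring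
    rw [this]
    exact_mod_cast Int.natCast_dvd_natCast.2 h2
  · rintro ⟨h1, h2⟩
    refine ⟨h1, ?_⟩
    have h3 : ((2:ℤ) ^ (j+2)) ∣ ((wtEv c : ℕ) : ℤ) := by
      rw [dvd_congr_modEq (wtEv_modEq (by omega) c)]
      exact h2
    have h4 : ((2 ^ (j+1+1) : ℕ) : ℤ) ∣ ((wtEv c : ℕ) : ℤ) := by
      have hh : ((2:ℤ) ^ (j+2)) = ((2 ^ (j+1+1) : ℕ) : ℤ) := by push_cast; ring
      rw [← hh]
      exact h3
    exact_mod_cast h4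

lemma dotp_ts
    (hC : (C : Set (Fin n → ZMod (2 ^ (j + 1)))) = dualCode (C : Set (Fin n → ZMod (2 ^ (j + 1)))))
    (t s : Fin n → ZMod (2 ^ (j + 1))) (ht : t ∈ C) (ht0 : t ∉ deSub (j+1) n C)
    (hs : s ∈ dualCode (deSub (j+1) n C)) (hsC : s ∉ C) :
    dotp t s = (2:ZMod (2 ^ (j + 1))) ^ j := by
  have hdot : ∀ x ∈ C, ∀ y ∈ C, dotp x y = 0 := by
    intro x hx y hy
    have hy' : y ∈ dualCode (C : Set (Fin n → ZMod (2 ^ (j + 1)))) := by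
      rw [← hC]; exact hy
    exact hy' x hx
  have hqvC : ∀ c ∈ C, ((2:ℤ) ^ (j+1)) ∣ qv c :=
    fun c hc => (dotp_eq_zero_iff c c).1 (hdot c hc c hc)
  have hqt_not : ¬ ((2:ℤ) ^ (j+2)) ∣ qv t := by
    intro hd
    exact ht0 ((mem_deSub_iff C t).2 ⟨ht, hd⟩)
  have hqt : qv t ≡ 2 ^ (j+1) [ZMOD ((2:ℤ) ^ (j+2))] :=
    half_mod (hqvC t ht) (by simpa using hqt_not)
  have hst0 : ∀ c ∈ deSub (j+1) n C, dotp c s = 0 := fun c hc => hs c hc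
  have h2t : t + t ∈ deSub (j+1) n C := by
    refine (mem_deSub_iff C _).2 ⟨C.add_mem ht ht, ?_⟩
    have h1 := qv_add (by omega) t t
    obtain ⟨d, hd⟩ := hqvC t ht
    have h4 : qv t + qv t + 2 * ipz t t = 4 * qv t := by
      rw [show ipz t t = qv t from rfl]; ring
    rw [h4] at h1
    rw [dvd_congr_modEq h1]
    exact ⟨2*d, by rw [hd]; ring⟩
  have hts2 : dotp t s + dotp t s = 0 := by
    rw [← dotp_add_left]
    exact hst0 (t+t) h2t
  have htsne : dotp t s ≠ 0 := by
    intro h0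
    apply hsC
    have hsmem : s ∈ dualCode (C : Set (Fin n → ZMod (2 ^ (j + 1)))) := by
      intro c hcC
      by_cases hcd : ((2:ℤ) ^ (j+2)) ∣ qv c
      · exact hst0 c ((mem_deSub_iff C c).2 ⟨hcC, hcd⟩)
      · have hct : c + t ∈ deSub (j+1) n C := by
          refine (mem_deSub_iff C _).2 ⟨C.add_mem hcC ht, ?_⟩
          have h1 := qv_add (by omega) c t
          rw [dvd_congr_modEq h1]
          have hqc : qv c ≡ 2 ^ (j+1) [ZMOD ((2:ℤ) ^ (j+2))] :=
            half_mod (hqvC c hcC) (by simpa using hcd)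
          have hipct : ((2:ℤ) ^ (j+1)) ∣ ipz c t := (dotp_eq_zero_iff c t).1 (hdot c hcC t ht)
          obtain ⟨e, he⟩ := hipct
          have hsum : qv c + qv t + 2*ipz c t ≡ 2^(j+1) + 2^(j+1) + 2*((2:ℤ)^(j+1)*e)
              [ZMOD ((2:ℤ) ^ (j+2))] := by
            exact (hqc.add hqt).add (by rw [he])
          rw [dvd_congr_modEq hsum]
          exact ⟨1 + e, by ring⟩
        have hz := hst0 (c+t) hct
        rw [dotp_add_left, h0, add_zero] at hz
        exact hz
    rw [← SetLike.mem_coe, hC]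
    exact hsmem
  exact zmod_add_self (k := j) (dotp t s) hts2 htsne

lemma dotp_ss (hn : n % 4 = 2)
    (hC : (C : Set (Fin n → ZMod (2 ^ (j + 1)))) = dualCode (C : Set (Fin n → ZMod (2 ^ (j + 1)))))
    (t s : Fin n → ZMod (2 ^ (j + 1))) (ht : t ∈ C) (ht0 : t ∉ deSub (j+1) n C)
    (hs : s ∈ dualCode (deSub (j+1) n C)) (hsC : s ∉ C) :
    dotp s s = (2:ZMod (2 ^ (j + 1))) ^ j := by
  classical
  -- basic facts
  have hdot : ∀ x ∈ C, ∀ y ∈ C, dotp x y = 0 := by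
    intro x hx y hy
    have hy' : y ∈ dualCode (C : Set (Fin n → ZMod (2 ^ (j + 1)))) := by
      rw [← hC]; exact hy
    exact hy' x hx
  have hqvC : ∀ c ∈ C, ((2:ℤ) ^ (j+1)) ∣ qv c :=
    fun c hc => (dotp_eq_zero_iff c c).1 (hdot c hc c hc)
  have hst0 : ∀ c ∈ deSub (j+1) n C, dotp c s = 0 := fun c hc => hs c hc
  have hqt_not : ¬ ((2:ℤ) ^ (j+2)) ∣ qv t := by
    intro hd
    exact ht0 ((mem_deSub_iff C t).2 ⟨ht, hd⟩)
  have hqt : qv t ≡ 2 ^ (j+1) [ZMOD ((2:ℤ) ^ (j+2))] :=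
    half_mod (hqvC t ht) (by simpa using hqt_not)
  have hts : dotp t s = (2:ZMod (2 ^ (j + 1))) ^ j := dotp_ts C hC t s ht ht0 hs hsC
  have hipzts : ((2:ℤ) ^ (j+1)) ∣ ipz t s - 2 ^ j := by
    have hcast : ((ipz t s - 2 ^ j : ℤ) : ZMod (2 ^ (j+1))) = 0 := by
      push_cast
      rw [cast_ipz, hts]
      ring
    rw [ZMod.intCast_zmod_eq_zero_iff_dvd] at hcast
    have hmm : (((2:ℕ) ^ (j+1) : ℕ) : ℤ) = (2:ℤ) ^ (j+1) := by push_cast; ring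
    rw [← hmm]
    exact hcast
  -- finsets
  set B : Finset (Fin n → ZMod (2 ^ (j + 1))) := Finset.univ.filter (fun u => u ∈ C) with hBdef
  set B₀ : Finset (Fin n → ZMod (2 ^ (j + 1))) :=
    Finset.univ.filter (fun u => u ∈ deSub (j+1) n C) with hB₀def
  have hBmem : ∀ u, u ∈ B ↔ u ∈ C := by intro u; simp [hBdef]
  have hB₀mem : ∀ u, u ∈ B₀ ↔ u ∈ deSub (j+1) n C := by intro u; simp [hB₀def]
  have hB₀B : B₀ ⊆ B := by
    intro u hu
    rw [hB₀mem] at hu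
    rw [hBmem]
    exact ((mem_deSub_iff C u).1 hu).1
  have hB₀add : ∀ a ∈ B₀, ∀ b ∈ B₀, a + b ∈ B₀ := by
    intro a ha b hb
    rw [hB₀mem] at *
    obtain ⟨haC, haq⟩ := (mem_deSub_iff C a).1 ha
    obtain ⟨hbC, hbq⟩ := (mem_deSub_iff C b).1 hb
    refine (mem_deSub_iff C _).2 ⟨C.add_mem haC hbC, ?_⟩
    rw [dvd_congr_modEq (qv_add (by omega) a b)]
    obtain ⟨e, he⟩ := (dotp_eq_zero_iff a b).1 (hdot a haC b hbC)
    refine dvd_add (dvd_add haq hbq) ⟨e, by rw [he]; ring⟩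
  have hB₀neg : ∀ a ∈ B₀, -a ∈ B₀ := by
    intro a ha
    rw [hB₀mem] at *
    obtain ⟨haC, haq⟩ := (mem_deSub_iff C a).1 ha
    refine (mem_deSub_iff C _).2 ⟨C.neg_mem haC, ?_⟩
    rw [dvd_congr_modEq (qv_neg_modEq (by omega) a)]
    exact haq
  have hB₀0 : (0 : Fin n → ZMod (2 ^ (j + 1))) ∈ B₀ := by
    rw [hB₀mem]
    refine (mem_deSub_iff C _).2 ⟨C.zero_mem, ?_⟩
    have : qv (0 : Fin n → ZMod (2 ^ (j + 1))) = 0 := by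
      unfold qv ipz; simp
    rw [this]
    exact dvd_zero _
  have hBadd : ∀ a ∈ B, ∀ b ∈ B, a + b ∈ B := by
    intro a ha b hb
    rw [hBmem] at *
    exact C.add_mem ha hb
  have hBneg : ∀ a ∈ B, -a ∈ B := by
    intro a ha
    rw [hBmem] at *
    exact C.neg_mem ha
  -- counting
  have hq_B₀ : ∀ c ∈ B₀, ((2:ℤ) ^ ((j+1)+1)) ∣ qv c := by
    intro c hc
    exact ((mem_deSub_iff C c).1 ((hB₀mem c).1 hc)).2
  have hperp0 := perp_card B₀ hB₀add hB₀neg hB₀0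
  have hperpC := perp_card B hBadd hBneg ((hBmem 0).2 C.zero_mem)
  have hDC : Finset.univ.filter
      (fun u : Fin n → ZMod (2 ^ (j + 1)) => ∀ c ∈ B, dotp c u = 0) = B := by
    ext u
    simp only [Finset.mem_filter, Finset.mem_univ, true_and]
    constructor
    · intro h
      rw [hBmem, ← SetLike.mem_coe, hC]
      intro c hc
      exact h c ((hBmem c).2 hc)
    · intro hu c hc
      exact hdot c ((hBmem c).1 hc) u ((hBmem u).1 hu)
  rw [hDC] at hperpC
  -- B \ B₀ has the same size as B₀
  have hnd : ¬ ((2:ℤ) ^ (j+2)) ∣ (2:ℤ) ^ (j+1) := by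
    rintro ⟨d, hd⟩
    have h1 : (2:ℤ) ^ (j+1) * 1 = (2:ℤ) ^ (j+1) * (2 * d) := by
      calc (2:ℤ) ^ (j+1) * 1 = (2:ℤ) ^ (j+1) := by ring
        _ = 2 ^ (j+2) * d := hd
        _ = (2:ℤ) ^ (j+1) * (2 * d) := by ring
    have h2 := mul_left_cancel₀ (show ((2:ℤ) ^ (j+1)) ≠ 0 from by positivity) h1
    omega
  have hplus : ∀ c ∈ B₀, c + t ∈ B \ B₀ := by
    intro c hc
    obtain ⟨hcC, hcq⟩ := (mem_deSub_iff C c).1 ((hB₀mem c).1 hc)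
    rw [Finset.mem_sdiff]
    constructor
    · rw [hBmem]; exact C.add_mem hcC ht
    · rw [hB₀mem]
      intro hmem
      obtain ⟨_, hq⟩ := (mem_deSub_iff C _).1 hmem
      rw [dvd_congr_modEq (qv_add (by omega) c t)] at hq
      obtain ⟨e, he⟩ := (dotp_eq_zero_iff c t).1 (hdot c hcC t ht)
      have h2 : qv c + qv t + 2 * ipz c t ≡ 0 + 2^(j+1) + 2*((2:ℤ)^(j+1)*e)
          [ZMOD ((2:ℤ) ^ (j+2))] := by
        refine Int.ModEq.add (Int.ModEq.add ?_ hqt) (by rw [he])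
        rw [Int.modEq_iff_dvd]
        obtain ⟨f, hf⟩ := hcq
        exact ⟨-f, by rw [show (0:ℤ) - qv c = -(qv c) from by ring, hf]; ring⟩
      rw [dvd_congr_modEq h2] at hq
      have h3 : ((2:ℤ) ^ (j+2)) ∣ (2:ℤ)^(j+1) := by
        have h4 : (0:ℤ) + 2^(j+1) + 2*((2:ℤ)^(j+1)*e) = 2^(j+1) + 2^(j+2)*e := by ring
        rw [h4] at hq
        obtain ⟨g, hg⟩ := hq
        exact ⟨g - e, by rw [show (2:ℤ)^(j+1) = (2^(j+1) + 2^(j+2)*e) - 2^(j+2)*e from by ring, hg]; ring⟩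
      exact hnd h3
  have hminus : ∀ c ∈ B \ B₀, c - t ∈ B₀ := by
    intro c hc
    rw [Finset.mem_sdiff] at hc
    obtain ⟨hcB, hcnB₀⟩ := hc
    have hcC : c ∈ C := (hBmem c).1 hcB
    have hcnq : ¬ ((2:ℤ) ^ (j+2)) ∣ qv c := by
      intro hd
      exact hcnB₀ ((hB₀mem c).2 ((mem_deSub_iff C c).2 ⟨hcC, hd⟩))
    have hqc : qv c ≡ 2 ^ (j+1) [ZMOD ((2:ℤ) ^ (j+2))] :=
      half_mod (hqvC c hcC) (by simpa using hcnq)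
    rw [hB₀mem]
    refine (mem_deSub_iff C _).2 ⟨C.sub_mem hcC ht, ?_⟩
    rw [sub_eq_add_neg]
    rw [dvd_congr_modEq (qv_add (by omega) c (-t))]
    have hqnt : qv (-t) ≡ 2 ^ (j+1) [ZMOD ((2:ℤ) ^ (j+2))] :=
      (qv_neg_modEq (by omega) t).trans hqt
    obtain ⟨e, he⟩ := (dotp_eq_zero_iff c (-t)).1 (hdot c hcC (-t) (C.neg_mem ht))
    have h2 : qv c + qv (-t) + 2 * ipz c (-t) ≡ 2^(j+1) + 2^(j+1) + 2*((2:ℤ)^(j+1)*e)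
        [ZMOD ((2:ℤ) ^ (j+2))] := Int.ModEq.add (hqc.add hqnt) (by rw [he])
    rw [dvd_congr_modEq h2]
    exact ⟨1 + e, by ring⟩
  have hsdiff : (B \ B₀).card = B₀.card := by
    apply Finset.card_nbij' (fun c => c - t) (fun c => c + t)
    · exact hminus
    · exact hplus
    · intro a _; simp
    · intro a _; simp
  have hBcard : B.card = 2 * B₀.card := by
    have := Finset.card_sdiff_add_card_eq_card hB₀B
    omega
  set D : Finset (Fin n → ZMod (2 ^ (j + 1))) :=
    Finset.univ.filter (fun u => ∀ c ∈ B₀, dotp c u = 0) with hDdef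
  have hB₀pos : 0 < B₀.card := Finset.card_pos.2 ⟨0, hB₀0⟩
  have hDcard : D.card = 2 * B.card := by
    have h1 : B₀.card * D.card = B₀.card * (2 * B.card) := by
      rw [hperp0, ← hperpC, hBcard]
      ring
    exact Nat.eq_of_mul_eq_mul_left hB₀pos h1
  -- the three pieces of D
  set E₁ : Finset (Fin n → ZMod (2 ^ (j + 1))) := B₀.image (fun c => s + c) with hE₁def
  set E₂ : Finset (Fin n → ZMod (2 ^ (j + 1))) := B₀.image (fun c => (s + t) + c) with hE₂def
  have hE₁card : E₁.card = B₀.card := Finset.card_image_of_injective _ (add_right_injective s)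
  have hE₂card : E₂.card = B₀.card := Finset.card_image_of_injective _ (add_right_injective (s+t))
  have hBD : B ⊆ D := by
    intro u hu
    rw [hDdef, Finset.mem_filter]
    refine ⟨Finset.mem_univ _, ?_⟩
    intro c hc
    exact hdot c ((mem_deSub_iff C c).1 ((hB₀mem c).1 hc)).1 u ((hBmem u).1 hu)
  have hE₁D : E₁ ⊆ D := by
    intro u hu
    rw [hE₁def] at hu
    obtain ⟨c, hc, rfl⟩ := Finset.mem_image.1 hu
    rw [hDdef, Finset.mem_filter]
    refine ⟨Finset.mem_univ _, ?_⟩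
    intro c' hc'
    rw [dotp_add_right]
    rw [hst0 c' ((hB₀mem c').1 hc'),
      hdot c' ((mem_deSub_iff C c').1 ((hB₀mem c').1 hc')).1 c
        ((mem_deSub_iff C c).1 ((hB₀mem c).1 hc)).1]
    ring
  have hE₂D : E₂ ⊆ D := by
    intro u hu
    rw [hE₂def] at hu
    obtain ⟨c, hc, rfl⟩ := Finset.mem_image.1 hu
    rw [hDdef, Finset.mem_filter]
    refine ⟨Finset.mem_univ _, ?_⟩
    intro c' hc'
    have hc'C : c' ∈ C := ((mem_deSub_iff C c').1 ((hB₀mem c').1 hc')).1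
    rw [show (s + t) + c = s + (t + c) from by ring, dotp_add_right, dotp_add_right]
    rw [hst0 c' ((hB₀mem c').1 hc'), hdot c' hc'C t ht,
      hdot c' hc'C c ((mem_deSub_iff C c).1 ((hB₀mem c).1 hc)).1]
    ring
  have hd1 : Disjoint B E₁ := by
    rw [Finset.disjoint_left]
    intro u huB huE
    rw [hE₁def] at huE
    obtain ⟨c, hc, rfl⟩ := Finset.mem_image.1 huE
    apply hsC
    have : (s + c) - c ∈ C := C.sub_mem ((hBmem _).1 huB)
      ((mem_deSub_iff C c).1 ((hB₀mem c).1 hc)).1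
    simpa using this
  have hd2 : Disjoint B E₂ := by
    rw [Finset.disjoint_left]
    intro u huB huE
    rw [hE₂def] at huE
    obtain ⟨c, hc, rfl⟩ := Finset.mem_image.1 huE
    apply hsC
    have : ((s + t) + c) - t - c ∈ C := C.sub_mem (C.sub_mem ((hBmem _).1 huB) ht)
      ((mem_deSub_iff C c).1 ((hB₀mem c).1 hc)).1
    have h2 : ((s + t) + c) - t - c = s := by ring
    rwa [h2] at this
  have hd3 : Disjoint E₁ E₂ := by
    rw [Finset.disjoint_left]
    intro u huE1 huE2
    rw [hE₁def] at huE1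
    rw [hE₂def] at huE2
    obtain ⟨c, hc, hceq⟩ := Finset.mem_image.1 huE1
    obtain ⟨c', hc', hceq'⟩ := Finset.mem_image.1 huE2
    apply ht0
    have heq : t = c - c' := by
      have := hceq.trans hceq'.symm
      have h3 : s + c = s + (t + c') := by rw [this]; ring
      have h4 := add_left_cancel h3
      rw [h4]; ring
    have hmem : c - c' ∈ B₀ := by
      rw [sub_eq_add_neg]
      exact hB₀add c hc (-c') (hB₀neg c' hc')
    rw [heq]
    exact (hB₀mem _).1 hmem
  have hunion : B ∪ E₁ ∪ E₂ = D := by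
    apply Finset.eq_of_subset_of_card_le
    · intro u hu
      rcases Finset.mem_union.1 hu with hu' | hu'
      · rcases Finset.mem_union.1 hu' with h | h
        · exact hBD h
        · exact hE₁D h
      · exact hE₂D hu'
    · have hcu : (B ∪ E₁ ∪ E₂).card = B.card + B₀.card + B₀.card := by
        rw [Finset.card_union_of_disjoint, Finset.card_union_of_disjoint hd1, hE₁card, hE₂card]
        rw [Finset.disjoint_union_left]
        exact ⟨hd2, hd3⟩
      rw [hcu, hDcard]
      omega
  -- master identity and Gauss sum
  have hmaster := master_identity (show 1 ≤ j + 1 from by omega) B₀ hB₀add hB₀neg hB₀0 hq_B₀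
  have hGamma := gamma_eq (m := j+1) (n := n)
  have hsum_B : ∑ u ∈ B, ee ((j+1)+1) (qv u) = 0 := by
    have hsplit := Finset.sum_sdiff (f := fun u => ee ((j+1)+1) (qv u)) hB₀B
    have h1 : ∑ u ∈ B₀, ee ((j+1)+1) (qv u) = (B₀.card : ℂ) := by
      rw [Finset.sum_congr rfl (fun c hc => (ee_eq_one_iff _ _).2 (hq_B₀ c hc))]
      simp
    have h2 : ∑ u ∈ B \ B₀, ee ((j+1)+1) (qv u) = -(B₀.card : ℂ) := by
      have hterm : ∀ c ∈ B \ B₀, ee ((j+1)+1) (qv c) = -1 := by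
        intro c hc
        rw [Finset.mem_sdiff] at hc
        have hcC : c ∈ C := (hBmem c).1 hc.1
        have hcnq : ¬ ((2:ℤ)^(j+2)) ∣ qv c :=
          fun hd => hc.2 ((hB₀mem c).2 ((mem_deSub_iff C c).2 ⟨hcC, hd⟩))
        have hqc : qv c ≡ 2^(j+1) [ZMOD ((2:ℤ)^(j+1+1))] :=
          half_mod (hqvC c hcC) (by simpa using hcnq)
        rw [ee_congr hqc]
        exact ee_half_neg_one (j+1)
      rw [Finset.sum_congr rfl hterm, Finset.sum_const, hsdiff]
      simp
    rw [← hsplit, h1, h2]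
    ring
  have hsum_E₁ : ∑ u ∈ E₁, ee ((j+1)+1) (qv u) = (B₀.card : ℂ) * ee ((j+1)+1) (qv s) := by
    rw [hE₁def, Finset.sum_image (fun x _ y _ h => add_right_injective s h)]
    have hterm : ∀ c ∈ B₀, ee ((j+1)+1) (qv (s + c)) = ee ((j+1)+1) (qv s) := by
      intro c hc
      obtain ⟨hcC, hcq⟩ := (mem_deSub_iff C c).1 ((hB₀mem c).1 hc)
      apply ee_congr
      have h1 := qv_add (m := j+1) (by omega) s c
      obtain ⟨e, he⟩ := (dotp_eq_zero_iff c s).1 (hst0 c ((hB₀mem c).1 hc))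
      obtain ⟨f, hf⟩ := hcq
      have h2 : qv s + qv c + 2 * ipz s c ≡ qv s [ZMOD ((2:ℤ)^(j+1+1))] := by
        rw [Int.modEq_iff_dvd, ipz_comm s c]
        refine ⟨-f - e, ?_⟩
        rw [show qv s - (qv s + qv c + 2 * ipz c s) = -(qv c) - 2 * ipz c s from by ring, hf, he]
        ring
      exact h1.trans h2
    rw [Finset.sum_congr rfl hterm, Finset.sum_const, nsmul_eq_mul]
  have hqvst : ee ((j+1)+1) (qv (s + t)) = ee ((j+1)+1) (qv s) := by
    apply ee_congr
    have h1 := qv_add (m := j+1) (by omega) s t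
    obtain ⟨e, he⟩ := hipzts
    obtain ⟨f, hf⟩ := Int.modEq_iff_dvd.1 hqt
    have h2 : qv s + qv t + 2 * ipz s t ≡ qv s [ZMOD ((2:ℤ)^(j+1+1))] := by
      rw [Int.modEq_iff_dvd, ipz_comm s t]
      refine ⟨f - e - 1, ?_⟩
      have he' : ipz t s = 2^j + 2^(j+1)*e := by linarith [he]
      have hf' : qv t = 2^(j+1) - 2^(j+1+1)*f := by
        have : (2:ℤ)^(j+1) - qv t = 2^(j+2)*f := hf
        have hpp : (2:ℤ)^(j+2) = 2^(j+1+1) := by norm_num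
        linarith [this, hpp ▸ this]
      rw [he', hf']
      ring
    exact h1.trans h2
  have hsum_E₂ : ∑ u ∈ E₂, ee ((j+1)+1) (qv u) = (B₀.card : ℂ) * ee ((j+1)+1) (qv s) := by
    rw [hE₂def, Finset.sum_image (fun x _ y _ h => add_right_injective (s+t) h)]
    have hterm : ∀ c ∈ B₀, ee ((j+1)+1) (qv ((s + t) + c)) = ee ((j+1)+1) (qv s) := by
      intro c hc
      obtain ⟨hcC, hcq⟩ := (mem_deSub_iff C c).1 ((hB₀mem c).1 hc)
      have hstc : dotp c (s + t) = 0 := by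
        rw [dotp_add_right, hst0 c ((hB₀mem c).1 hc), hdot c hcC t ht]
        ring
      obtain ⟨e, he⟩ := (dotp_eq_zero_iff c (s+t)).1 hstc
      obtain ⟨f, hf⟩ := hcq
      rw [← hqvst]
      apply ee_congr
      have h1 := qv_add (m := j+1) (by omega) (s+t) c
      have h2 : qv (s+t) + qv c + 2 * ipz (s+t) c ≡ qv (s+t) [ZMOD ((2:ℤ)^(j+1+1))] := by
        rw [Int.modEq_iff_dvd, ipz_comm (s+t) c]
        refine ⟨-f - e, ?_⟩
        rw [show qv (s+t) - (qv (s+t) + qv c + 2 * ipz c (s+t))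
          = -(qv c) - 2 * ipz c (s+t) from by ring, hf, he]
        ring
      exact h1.trans h2
    rw [Finset.sum_congr rfl hterm, Finset.sum_const, nsmul_eq_mul]
  have hkey : (B.card : ℂ) * ee ((j+1)+1) (qv s) = gg (j+1) ^ n := by
    have hsplitD : ∑ u ∈ D, ee ((j+1)+1) (qv u)
        = ∑ u ∈ B, ee ((j+1)+1) (qv u) + ∑ u ∈ E₁, ee ((j+1)+1) (qv u)
          + ∑ u ∈ E₂, ee ((j+1)+1) (qv u) := by
      rw [← hunion, Finset.sum_union, Finset.sum_union hd1]
      rw [Finset.disjoint_union_left]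
      exact ⟨hd2, hd3⟩
    rw [hmaster, hGamma] at hsplitD
    rw [hsplitD, hsum_B, hsum_E₁, hsum_E₂, hBcard]
    push_cast
    ring
  -- squaring
  have h1 : ee ((j+1)+1) (qv s)^2 = ee (j+1) (qv s) := by
    rw [sq, ← ee_add, show qv s + qv s = 2 * qv s from by ring, ee_succ_two_mul]
  have h2 : (gg (j+1) ^ n)^2 = ((2:ℂ)^(j+1))^n * ((ee 2 1)^n) := by
    rw [← pow_mul, mul_comm n 2, pow_mul, gg_sq (j+1) (by omega), mul_pow]
  obtain ⟨r, hr⟩ : ∃ r, n = 4*r + 2 := ⟨n/4, by omega⟩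
  have hz : (ee 2 1)^n = -1 := by
    rw [hr, show 4*r+2 = 2*(2*r+1) from by ring, pow_mul, z_sq]
    exact Odd.neg_one_pow ⟨r, by ring⟩
  have hBC : ((B.card:ℂ))^2 = ((2:ℂ)^(j+1))^n := by
    have hc1 : ((B.card * B.card : ℕ) : ℂ) = (((2^(j+1))^n : ℕ) : ℂ) := by
      exact_mod_cast congrArg (fun x : ℕ => (x : ℂ)) hperpC
    push_cast at hc1
    rw [sq, hc1]
  have hsq : ((B.card:ℂ))^2 * ee ((j+1)+1) (qv s)^2 = (gg (j+1) ^ n)^2 := by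
    rw [← mul_pow, hkey]
  rw [h1, h2, hz, hBC] at hsq
  have hne2 : (((2:ℂ)^(j+1))^n) ≠ 0 := pow_ne_zero _ (pow_ne_zero _ two_ne_zero)
  have hee : ee (j+1) (qv s) = -1 := mul_left_cancel₀ hne2 hsq
  have hdvd : (2:ℤ)^(j+1) ∣ qv s - 2^j := by
    have ha1 : ee (j+1) ((2:ℤ)^j + (qv s - 2^j)) = ee (j+1) (2^j) * ee (j+1) (qv s - 2^j) :=
      ee_add _ _ _
    rw [show (2:ℤ)^j + (qv s - 2^j) = qv s from by ring] at ha1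
    rw [hee] at ha1
    rw [show ee (j+1) ((2:ℤ)^j) = -1 from by exact_mod_cast ee_half_neg_one j] at ha1
    have ha2 : ee (j+1) (qv s - 2^j) = 1 := by
      have ha3 : (-1 : ℂ) * ee (j+1) (qv s - 2^j) = -1 * 1 := by
        rw [← ha1]; ring
      exact mul_left_cancel₀ (neg_ne_zero.2 one_ne_zero) ha3
    rw [ee_eq_one_iff] at ha2
    exact ha2
  obtain ⟨d, hd⟩ := hdvd
  have hqv_eq : qv s = 2^j + 2^(j+1)*d := by linarith [hd]
  have hfinal : dotp s s = ((qv s : ℤ) : ZMod (2^(j+1))) := (cast_ipz s s).symm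
  rw [hfinal, hqv_eq]
  push_cast
  have hz0 : ((2:ZMod (2^(j+1))))^(j+1) = 0 := by
    have hns := ZMod.natCast_self (2^(j+1))
    push_cast at hns
    exact hns
  rw [hz0]
  ring
end main

end aux

theorem orth_relations_n_two_mod_four (m n : ℕ) (hm : 0 < m) (hn : n % 4 = 2)
    (C : AddSubgroup (Fin n → ZMod (2 ^ m)))
    (hC : (C : Set (Fin n → ZMod (2 ^ m))) = dualCode (C : Set (Fin n → ZMod (2 ^ m))))
    (hTypeI : ∃ c ∈ C, ¬ 2 ^ (m + 1) ∣ wtEv c)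
    (t s : Fin n → ZMod (2 ^ m)) (ht : t ∈ C) (ht0 : t ∉ deSub m n C)
    (hs : s ∈ dualCode (deSub m n C)) (hsC : s ∉ C) :
    (∀ x ∈ (s + ·) '' deSub m n C, ∀ y ∈ (s + ·) '' deSub m n C,
      dotp x y = (2 ^ (m - 1) : ZMod (2 ^ m))) ∧
    (∀ x ∈ (s + ·) '' deSub m n C, ∀ y ∈ (t + ·) '' deSub m n C,
      dotp x y = (2 ^ (m - 1) : ZMod (2 ^ m))) ∧
    (∀ x ∈ (s + ·) '' deSub m n C, ∀ y ∈ (s + t + ·) '' deSub m n C,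
      dotp x y = 0) ∧
    (∀ x ∈ (t + ·) '' deSub m n C, ∀ y ∈ (t + ·) '' deSub m n C,
      dotp x y = 0) := by
  obtain ⟨j, rfl⟩ : ∃ j, m = j + 1 := ⟨m - 1, by omega⟩
  have hss := dotp_ss C hn hC t s ht ht0 hs hsC
  have hts := dotp_ts C hC t s ht ht0 hs hsC
  have hst : dotp s t = (2:ZMod (2 ^ (j+1)))^j := by rw [dotp_comm]; exact hts
  have hdot : ∀ x ∈ C, ∀ y ∈ C, dotp x y = 0 := by
    intro x hx y hy
    have hy' : y ∈ dualCode (C : Set (Fin n → ZMod (2 ^ (j + 1)))) := by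
      rw [← hC]; exact hy
    exact hy' x hx
  have hst0 : ∀ c ∈ deSub (j+1) n C, dotp c s = 0 := fun c hc => hs c hc
  have hdeC : ∀ c ∈ deSub (j+1) n C, c ∈ C := fun c hc => hc.1
  have hz0 : ((2:ZMod (2^(j+1))))^j + ((2:ZMod (2^(j+1))))^j = 0 := by
    have hns := ZMod.natCast_self (2^(j+1))
    push_cast at hns
    rw [← hns]
    ring
  have hmj : (j + 1) - 1 = j := by omega
  rw [hmj]
  refine ⟨?_, ?_, ?_, ?_⟩
  · rintro x ⟨a, ha, rfl⟩ y ⟨b, hb, rfl⟩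
    show dotp (s + a) (s + b) = _
    rw [dotp_add_left, dotp_add_right, dotp_add_right]
    rw [hss, dotp_comm s b, hst0 b hb, hst0 a ha,
      hdot a (hdeC a ha) b (hdeC b hb)]
    ring
  · rintro x ⟨a, ha, rfl⟩ y ⟨b, hb, rfl⟩
    show dotp (s + a) (t + b) = _
    rw [dotp_add_left, dotp_add_right, dotp_add_right]
    rw [hst, dotp_comm s b, hst0 b hb, hdot a (hdeC a ha) t ht,
      hdot a (hdeC a ha) b (hdeC b hb)]
    ring
  · rintro x ⟨a, ha, rfl⟩ y ⟨b, hb, rfl⟩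
    show dotp (s + a) ((s + t) + b) = _
    rw [dotp_add_left, dotp_add_right, dotp_add_right, dotp_add_right, dotp_add_right]
    rw [hss, hst, dotp_comm s b, hst0 b hb, hdot a (hdeC a ha) t ht,
      hdot a (hdeC a ha) b (hdeC b hb)]
    have has : dotp a s = 0 := hst0 a ha
    rw [has, hz0]
    ring
  · rintro x ⟨a, ha, rfl⟩ y ⟨b, hb, rfl⟩
    show dotp (t + a) (t + b) = _
    rw [dotp_add_left, dotp_add_right, dotp_add_right]
    rw [hdot t ht t ht, hdot t ht b (hdeC b hb), hdot a (hdeC a ha) t ht,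
      hdot a (hdeC a ha) b (hdeC b hb)]
    ring
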